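/- Let X be a random variable taking values in a measurable space, Y ∈ {0,1} a label, and μ*(x) = P(Y = 1 | X = x). Among all measurable decision rules δ : X → {0,1} with P(δ(X) = 1) > 0 satisfying the marginal false decision rate constraint E[1{δ(X)=1, Y=0}] / E[1{δ(X)=1}] ≤ α, any thresholding rule δ*(x) = 1{μ*(x) > t*} that attains the constraint with t* = inf{t ≥ 0 : E[1{μ*(X)>t, Y=0}]/E[1{μ*(X)>t}] ≤ α} maximizes the expected number of true decisions E[1{δ(X)=1, Y=1}], provided the distribution functions t ↦ P(μ*(X) > t) and t ↦ P(μ*(X) > t, Y = 0) are continuous at t* and the constraint set is nonempty. -/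

import Mathlib

open MeasureTheory


private lemma posterior_threshold_optimal_aux {α t ps ps1 pd pd1 : ℝ}
    (hα1 : α < 1) (hpsr : 0 < ps) (ht : 0 < t)
    (hA : pd1 - t * pd ≤ ps1 - t * ps)
    (hps1eq : ps1 = (1 - α) * ps)
    (hpdb : (1 - α) * pd ≤ pd1)
    (hstrict : t * ps < ps1) : pd1 ≤ ps1 := by
  by_contra hcon
  push_neg at hcon
  have hu : t * (ps - pd) ≤ ps1 - pd1 := by linarith
  have hu2 : ps1 - pd1 ≤ (1 - α) * (ps - pd) := by nlinarith
  have hulz : ps - pd < 0 := by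
    by_contra h
    push_neg at h
    nlinarith [mul_nonneg ht.le h]
  have h1α : 1 - α ≤ t := by
    by_contra h
    push_neg at h
    nlinarith [mul_neg_of_pos_of_neg (show (0:ℝ) < 1 - α - t by linarith) hulz]
  nlinarith [mul_nonneg (show (0:ℝ) ≤ t - (1 - α) by linarith) hpsr.le]

/-- Oracle optimality of posterior thresholding under an mFDR constraint (binary case):
among all measurable decision rules with positive decision probability satisfying the
marginal false decision rate constraint, the rule thresholding the posterior probability
μ* at t* maximizes the expected number of true decisions. -/
theorem posterior_threshold_optimal
    {Ω : Type*} [MeasurableSpace Ω] (μ : Measure Ω) [IsProbabilityMeasure μ]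
    {𝒳 : Type*} [MeasurableSpace 𝒳]
    (X : Ω → 𝒳) (hX : Measurable X)
    (Y : Ω → ℕ) (hY : Measurable Y) (hYrange : ∀ ω, Y ω = 0 ∨ Y ω = 1)
    (μstar : 𝒳 → ℝ) (hμstar : Measurable μstar)
    -- μstar ∘ X is a version of the conditional probability P(Y = 1 | X):
    (hcond : ∀ A : Set 𝒳, MeasurableSet A →
      (μ (X ⁻¹' A ∩ {ω | Y ω = 1})).toReal = ∫ ω in X ⁻¹' A, μstar (X ω) ∂μ)
    (α : ℝ) (hα : α ∈ Set.Ioo (0 : ℝ) 1)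
    (C : Set ℝ)
    (hC : C = {t : ℝ | 0 ≤ t ∧
      (μ {ω | μstar (X ω) > t ∧ Y ω = 0}).toReal /
        (μ {ω | μstar (X ω) > t}).toReal ≤ α})
    (hCne : C.Nonempty)
    (tstar : ℝ) (htstar : tstar = sInf C)
    -- continuity of the two distribution functions at t*:
    (hcont1 : ContinuousAt (fun t => (μ {ω | μstar (X ω) > t}).toReal) tstar)
    (hcont0 : ContinuousAt
      (fun t => (μ {ω | μstar (X ω) > t ∧ Y ω = 0}).toReal) tstar)
    -- the thresholding rule attains the constraint:
    (hpos : 0 < μ {ω | μstar (X ω) > tstar})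
    (hfeas : (μ {ω | μstar (X ω) > tstar ∧ Y ω = 0}).toReal /
        (μ {ω | μstar (X ω) > tstar}).toReal ≤ α)
    -- a competing feasible rule:
    (δ : 𝒳 → Bool) (hδ : Measurable δ)
    (hδpos : 0 < μ {ω | δ (X ω) = true})
    (hδfeas : (μ {ω | δ (X ω) = true ∧ Y ω = 0}).toReal /
        (μ {ω | δ (X ω) = true}).toReal ≤ α) :
    (μ {ω | δ (X ω) = true ∧ Y ω = 1}).toReal ≤
      (μ {ω | μstar (X ω) > tstar ∧ Y ω = 1}).toReal := by
  obtain ⟨hα0, hα1⟩ := hα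
  have hfm : Measurable (fun ω => μstar (X ω)) := hμstar.comp hX
  have hY1 : MeasurableSet {ω | Y ω = 1} := hY (measurableSet_singleton 1)
  have hY0 : MeasurableSet {ω | Y ω = 0} := hY (measurableSet_singleton 0)
  -- ## Step 1: integrability of μstar ∘ X
  -- it is a.e. in [0,1] because its set integrals are probabilities
  have key : ∀ a b : ℝ,
      (b < 0 ∨ 1 < a) → μ (X ⁻¹' (μstar ⁻¹' Set.Icc a b)) = 0 := by
    intro a b hcase
    set A : Set 𝒳 := μstar ⁻¹' Set.Icc a b with hA
    have hAm : MeasurableSet A := hμstar measurableSet_Icc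
    set S : Set Ω := X ⁻¹' A with hS
    have hSm : MeasurableSet S := hX hAm
    have hmemS : ∀ ω ∈ S, a ≤ μstar (X ω) ∧ μstar (X ω) ≤ b := by
      intro ω hω; exact hω
    have hIntS : IntegrableOn (fun ω => μstar (X ω)) S μ := by
      refine Integrable.mono' (integrable_const (max |a| |b|))
        hfm.aestronglyMeasurable ?_
      filter_upwards [ae_restrict_mem hSm] with ω hω
      rw [Real.norm_eq_abs, abs_le]
      have h1 : a ≤ μstar (X ω) := hω.1
      have h2 : μstar (X ω) ≤ b := hω.2
      constructor
      · have : -|a| ≤ a := neg_abs_le a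
        have : |a| ≤ max |a| |b| := le_max_left _ _
        linarith [neg_abs_le a]
      · have : b ≤ |b| := le_abs_self b
        have : |b| ≤ max |a| |b| := le_max_right _ _
        linarith [le_abs_self b]
    have h0 : 0 ≤ ∫ ω in S, μstar (X ω) ∂μ := by
      rw [← hcond A hAm]; exact ENNReal.toReal_nonneg
    have hConst : IntegrableOn (fun _ : Ω => b) S μ :=
      integrableOn_const (measure_ne_top μ S)
    have hConsta : IntegrableOn (fun _ : Ω => a) S μ :=
      integrableOn_const (measure_ne_top μ S)
    rcases hcase with hb | ha
    · -- b < 0 : the integral is ≤ b * μ S, forcing μ S = 0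
      have h1 : ∫ ω in S, μstar (X ω) ∂μ ≤ ∫ _ω in S, b ∂μ := by
        refine setIntegral_mono_on hIntS hConst hSm ?_
        intro ω hω; exact (hmemS ω hω).2
      rw [setIntegral_const, smul_eq_mul, measureReal_def] at h1
      have hnn : (0:ℝ) ≤ (μ S).toReal := ENNReal.toReal_nonneg
      have : (μ S).toReal = 0 := by nlinarith
      rcases (ENNReal.toReal_eq_zero_iff _).1 this with h | h
      · exact h
      · exact absurd h (measure_ne_top μ S)
    · -- 1 < a : the integral is ≥ a * μ S but also ≤ μ S, forcing μ S = 0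
      have h1 : ∫ _ω in S, a ∂μ ≤ ∫ ω in S, μstar (X ω) ∂μ := by
        refine setIntegral_mono_on hConsta hIntS hSm ?_
        intro ω hω; exact (hmemS ω hω).1
      rw [setIntegral_const, smul_eq_mul, measureReal_def] at h1
      have h2 : ∫ ω in S, μstar (X ω) ∂μ ≤ (μ S).toReal := by
        rw [← hcond A hAm]
        exact ENNReal.toReal_mono (measure_ne_top μ S)
          (measure_mono Set.inter_subset_left)
      have hnn : (0:ℝ) ≤ (μ S).toReal := ENNReal.toReal_nonneg
      have : (μ S).toReal = 0 := by nlinarith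
      rcases (ENNReal.toReal_eq_zero_iff _).1 this with h | h
      · exact h
      · exact absurd h (measure_ne_top μ S)
  have hae : ∀ᵐ ω ∂μ, 0 ≤ μstar (X ω) ∧ μstar (X ω) ≤ 1 := by
    rw [ae_iff]
    have hneg : μ {ω | μstar (X ω) < 0} = 0 := by
      have hsub : {ω | μstar (X ω) < 0} ⊆
          ⋃ (k : ℕ), ⋃ (n : ℕ),
            X ⁻¹' (μstar ⁻¹' Set.Icc (-(n+1) : ℝ) (-(1/(k+1)))) := by
        intro ω hω
        have hω' : μstar (X ω) < 0 := hω
        obtain ⟨k, hk⟩ := exists_nat_one_div_lt (show (0:ℝ) < -μstar (X ω) by linarith)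
        obtain ⟨n, hn⟩ := exists_nat_ge (-μstar (X ω))
        refine Set.mem_iUnion.2 ⟨k, Set.mem_iUnion.2 ⟨n, ?_⟩⟩
        simp only [Set.mem_preimage, Set.mem_Icc]
        constructor <;> push_cast <;> [linarith; linarith]
      refine measure_mono_null hsub (measure_iUnion_null fun k =>
        measure_iUnion_null fun n => key _ _ (Or.inl ?_))
      have : (0:ℝ) < 1/((k:ℝ)+1) := by positivity
      linarith
    have hgt1 : μ {ω | 1 < μstar (X ω)} = 0 := by
      have hsub : {ω | 1 < μstar (X ω)} ⊆
          ⋃ (k : ℕ), ⋃ (n : ℕ),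
            X ⁻¹' (μstar ⁻¹' Set.Icc ((1 + 1/(k+1)) : ℝ) ((n+1) : ℝ)) := by
        intro ω hω
        have hω' : 1 < μstar (X ω) := hω
        obtain ⟨k, hk⟩ := exists_nat_one_div_lt (show (0:ℝ) < μstar (X ω) - 1 by linarith)
        obtain ⟨n, hn⟩ := exists_nat_ge (μstar (X ω))
        refine Set.mem_iUnion.2 ⟨k, Set.mem_iUnion.2 ⟨n, ?_⟩⟩
        simp only [Set.mem_preimage, Set.mem_Icc]
        constructor <;> push_cast <;> [linarith; linarith]
      refine measure_mono_null hsub (measure_iUnion_null fun k =>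
        measure_iUnion_null fun n => key _ _ (Or.inr ?_))
      have : (0:ℝ) < 1/((k:ℝ)+1) := by positivity
      linarith
    have hsub : {ω | ¬(0 ≤ μstar (X ω) ∧ μstar (X ω) ≤ 1)} ⊆
        {ω | μstar (X ω) < 0} ∪ {ω | 1 < μstar (X ω)} := by
      intro ω hω
      simp only [Set.mem_setOf_eq, not_and, not_le] at hω
      rcases lt_or_ge (μstar (X ω)) 0 with h | h
      · exact Or.inl h
      · exact Or.inr (hω h)
    exact measure_mono_null hsub (measure_union_null hneg hgt1)
  have hInt : Integrable (fun ω => μstar (X ω)) μ := by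
    refine Integrable.mono' (integrable_const 1) hfm.aestronglyMeasurable ?_
    filter_upwards [hae] with ω hω
    rw [Real.norm_eq_abs, abs_le]
    exact ⟨by linarith [hω.1], hω.2⟩
  -- ## Step 2: set up notation
  set Astar : Set 𝒳 := {x | μstar x > tstar} with hAstar
  have hAstarm : MeasurableSet Astar := measurableSet_lt measurable_const hμstar
  set Ad : Set 𝒳 := {x | δ x = true} with hAd
  have hAdm : MeasurableSet Ad := hδ (measurableSet_singleton true)
  have hDstarm : MeasurableSet (X ⁻¹' Astar) := hX hAstarm
  have hDdm : MeasurableSet (X ⁻¹' Ad) := hX hAdm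
  -- set identifications
  have es : X ⁻¹' Astar = {ω | μstar (X ω) > tstar} := rfl
  have ed : X ⁻¹' Ad = {ω | δ (X ω) = true} := rfl
  have es1 : X ⁻¹' Astar ∩ {ω | Y ω = 1} = {ω | μstar (X ω) > tstar ∧ Y ω = 1} := rfl
  have es0 : X ⁻¹' Astar ∩ {ω | Y ω = 0} = {ω | μstar (X ω) > tstar ∧ Y ω = 0} := rfl
  have ed1 : X ⁻¹' Ad ∩ {ω | Y ω = 1} = {ω | δ (X ω) = true ∧ Y ω = 1} := rfl
  have ed0 : X ⁻¹' Ad ∩ {ω | Y ω = 0} = {ω | δ (X ω) = true ∧ Y ω = 0} := rfl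
  set ps : ℝ := (μ {ω | μstar (X ω) > tstar}).toReal with hps
  set ps1 : ℝ := (μ {ω | μstar (X ω) > tstar ∧ Y ω = 1}).toReal with hps1
  set ps0 : ℝ := (μ {ω | μstar (X ω) > tstar ∧ Y ω = 0}).toReal with hps0
  set pd : ℝ := (μ {ω | δ (X ω) = true}).toReal with hpd
  set pd1 : ℝ := (μ {ω | δ (X ω) = true ∧ Y ω = 1}).toReal with hpd1
  set pd0 : ℝ := (μ {ω | δ (X ω) = true ∧ Y ω = 0}).toReal with hpd0
  have hpsr : 0 < ps := ENNReal.toReal_pos hpos.ne' (measure_ne_top μ _)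
  have hpdr : 0 < pd := ENNReal.toReal_pos hδpos.ne' (measure_ne_top μ _)
  -- additivity over the label
  have hsplit : ∀ S : Set Ω, MeasurableSet S →
      (μ S).toReal = (μ (S ∩ {ω | Y ω = 0})).toReal + (μ (S ∩ {ω | Y ω = 1})).toReal := by
    intro S hSm
    have hdecomp : S = (S ∩ {ω | Y ω = 0}) ∪ (S ∩ {ω | Y ω = 1}) := by
      ext ω
      simp only [Set.mem_union, Set.mem_inter_iff, Set.mem_setOf_eq]
      constructor
      · intro h
        rcases hYrange ω with h0 | h1
        · exact Or.inl ⟨h, h0⟩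
        · exact Or.inr ⟨h, h1⟩
      · rintro (⟨h, -⟩ | ⟨h, -⟩) <;> exact h
    have hdisj : Disjoint (S ∩ {ω | Y ω = 0}) (S ∩ {ω | Y ω = 1}) := by
      rw [Set.disjoint_left]
      rintro ω ⟨-, h0⟩ ⟨-, h1⟩
      simp only [Set.mem_setOf_eq] at h0 h1
      rw [h0] at h1
      exact absurd h1 (by norm_num)
    conv_lhs => rw [hdecomp]
    rw [measure_union hdisj (hSm.inter hY1),
      ENNReal.toReal_add (measure_ne_top _ _) (measure_ne_top _ _)]
  have hsplitS : ps = ps0 + ps1 := by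
    have h := hsplit (X ⁻¹' Astar) hDstarm
    exact h
  have hsplitD : pd = pd0 + pd1 := by
    have h := hsplit (X ⁻¹' Ad) hDdm
    exact h
  -- feasibility rearranged
  have hdfeas' : pd0 ≤ α * pd := by
    have := (div_le_iff₀ hpdr).1 hδfeas
    linarith
  have hsfeas' : ps0 ≤ α * ps := by
    have := (div_le_iff₀ hpsr).1 hfeas
    linarith
  -- conditional-probability identities
  have hcs : ps1 = ∫ ω in X ⁻¹' Astar, μstar (X ω) ∂μ := by
    rw [hps1, ← es1]; exact hcond Astar hAstarm
  have hcd : pd1 = ∫ ω in X ⁻¹' Ad, μstar (X ω) ∂μ := by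
    rw [hpd1, ← ed1]; exact hcond Ad hAdm
  -- ## Step 3: the Neyman–Pearson exchange inequality
  have hIntSub : Integrable (fun ω => μstar (X ω) - tstar) μ :=
    hInt.sub (integrable_const tstar)
  have hsetint : ∀ S : Set Ω, MeasurableSet S →
      ∫ ω in S, (μstar (X ω) - tstar) ∂μ
        = (∫ ω in S, μstar (X ω) ∂μ) - tstar * (μ S).toReal := by
    intro S hSm
    rw [integral_sub hInt.integrableOn
      (integrableOn_const (measure_ne_top μ S)), setIntegral_const,
      smul_eq_mul, mul_comm, measureReal_def]
  have hexch : ∫ ω in X ⁻¹' Ad, (μstar (X ω) - tstar) ∂μ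
      ≤ ∫ ω in X ⁻¹' Astar, (μstar (X ω) - tstar) ∂μ := by
    rw [← sub_nonneg, ← integral_indicator hDstarm, ← integral_indicator hDdm,
      ← integral_sub (hIntSub.indicator hDstarm) (hIntSub.indicator hDdm)]
    refine integral_nonneg fun ω => ?_
    simp only [Pi.sub_apply, Pi.zero_apply]
    by_cases h1 : ω ∈ X ⁻¹' Astar <;> by_cases h2 : ω ∈ X ⁻¹' Ad
    · rw [Set.indicator_of_mem h1, Set.indicator_of_mem h2]
      simp
    · rw [Set.indicator_of_mem h1, Set.indicator_of_notMem h2]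
      have hgt : tstar < μstar (X ω) := h1
      linarith
    · rw [Set.indicator_of_notMem h1, Set.indicator_of_mem h2]
      have hle : ¬ tstar < μstar (X ω) := h1
      push_neg at hle
      linarith
    · rw [Set.indicator_of_notMem h1, Set.indicator_of_notMem h2]
      simp
  have hA : pd1 - tstar * pd ≤ ps1 - tstar * ps := by
    rw [hsetint _ hDstarm, hsetint _ hDdm, ← hcs, ← hcd] at hexch
    exact hexch
  -- ## Step 4: t* ≥ 0, and case t* = 0
  have hCsub : ∀ t ∈ C, 0 ≤ t := by
    intro t ht
    rw [hC] at ht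
    exact ht.1
  have ht0 : 0 ≤ tstar := by
    rw [htstar]
    exact Real.sInf_nonneg hCsub
  rcases eq_or_lt_of_le ht0 with ht | ht
  · -- t* = 0 : the exchange inequality finishes directly
    rw [← ht] at hA
    linarith
  -- ## Step 5: t* > 0 : the constraint is attained with equality at t*
  have hCbdd : BddBelow C := ⟨0, hCsub⟩
  have hbelow : ∀ t : ℝ, 0 ≤ t → t < tstar →
      α * (μ {ω | μstar (X ω) > t}).toReal
        ≤ (μ {ω | μstar (X ω) > t ∧ Y ω = 0}).toReal := by
    intro t ht' htlt
    have hnotC : t ∉ C := by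
      intro hmem
      exact absurd (csInf_le hCbdd hmem) (not_le.2 (htstar ▸ htlt))
    rw [hC] at hnotC
    simp only [Set.mem_setOf_eq, not_and, not_le] at hnotC
    have hratio := hnotC ht'
    have hgpos : 0 < (μ {ω | μstar (X ω) > t}).toReal := by
      refine ENNReal.toReal_pos ?_ (measure_ne_top μ _)
      refine ne_of_gt (lt_of_lt_of_le hpos (measure_mono ?_))
      intro ω hω
      exact lt_trans htlt hω
    have := (lt_div_iff₀ hgpos).1 hratio
    linarith
  have hseq : α * ps ≤ ps0 := by
    have htend : Filter.Tendsto
        (fun t => (μ {ω | μstar (X ω) > t ∧ Y ω = 0}).toReal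
          - α * (μ {ω | μstar (X ω) > t}).toReal)
        (nhdsWithin tstar (Set.Iio tstar))
        (nhds ((μ {ω | μstar (X ω) > tstar ∧ Y ω = 0}).toReal
          - α * (μ {ω | μstar (X ω) > tstar}).toReal)) :=
      ((hcont0.sub (hcont1.const_mul α)).tendsto).mono_left nhdsWithin_le_nhds
    have hev : ∀ᶠ t in nhdsWithin tstar (Set.Iio tstar),
        0 ≤ (μ {ω | μstar (X ω) > t ∧ Y ω = 0}).toReal
          - α * (μ {ω | μstar (X ω) > t}).toReal := by
      refine Filter.eventually_of_mem
        (Ioo_mem_nhdsLT_of_mem (⟨ht, le_refl tstar⟩ : tstar ∈ Set.Ioc 0 tstar)) ?_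
      intro t htmem
      have := hbelow t htmem.1.le htmem.2
      linarith
    have := ge_of_tendsto htend hev
    rw [← hps0, ← hps] at this
    linarith
  have hps0eq : ps0 = α * ps := le_antisymm hsfeas' hseq
  have hps1eq : ps1 = (1 - α) * ps := by rw [hsplitS] at *; linarith
  have hpdb : (1 - α) * pd ≤ pd1 := by nlinarith
  -- strict positivity of the exchange integral on δ*
  have hstrict : tstar * ps < ps1 := by
    have hposint : 0 < ∫ ω in X ⁻¹' Astar, (μstar (X ω) - tstar) ∂μ := by
      have hnn : 0 ≤ᵐ[μ.restrict (X ⁻¹' Astar)] fun ω => μstar (X ω) - tstar := by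
        filter_upwards [ae_restrict_mem hDstarm] with ω hω
        have hgt : tstar < μstar (X ω) := hω
        simp only [Pi.zero_apply]
        linarith
      refine (setIntegral_pos_iff_support_of_nonneg_ae hnn hIntSub.integrableOn).2 ?_
      refine lt_of_lt_of_le hpos (measure_mono ?_)
      intro ω hω
      refine ⟨?_, hω⟩
      have hgt : tstar < μstar (X ω) := hω
      simp only [Function.mem_support]
      intro hcontr
      linarith [sub_eq_zero.1 hcontr]
    rw [hsetint (X ⁻¹' Astar) hDstarm, ← hcs, es, ← hps] at hposint
    linarith
  exact posterior_threshold_optimal_aux hα1 hpsr ht hA hps1eq hpdb hstrict
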